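/- π² = 36·Li₂(1/2) − 36·Li₂(1/4) − 12·Li₂(1/8) + 6·Li₂(1/64). -/

import Mathlib

noncomputable def Li2 (z : ℝ) : ℝ := ∑' n : ℕ, z ^ (n + 1) / ((n : ℝ) + 1) ^ 2

lemma summable_aux : Summable (fun n : ℕ => 1 / ((n : ℝ) + 1) ^ 2) := by
  have := (summable_nat_add_iff (f := fun n : ℕ => 1 / (n : ℝ) ^ 2) 1).mpr
    (Real.summable_one_div_nat_pow.mpr one_lt_two)
  simpa using this

lemma hasSum_Li2 {x : ℝ} (h : |x| ≤ 1) :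
    HasSum (fun n : ℕ => x ^ (n + 1) / ((n : ℝ) + 1) ^ 2) (Li2 x) := by
  apply Summable.hasSum
  apply Summable.of_norm
  apply summable_aux.of_nonneg_of_le (fun n => norm_nonneg _)
  intro n
  calc ‖x ^ (n+1) / ((n:ℝ)+1) ^ 2‖ = |x| ^ (n+1) / ((n:ℝ)+1) ^ 2 := by
        rw [Real.norm_eq_abs, abs_div, abs_pow, abs_of_nonneg (by positivity : (0:ℝ) ≤ ((n:ℝ)+1)^2)]
    _ ≤ 1 / ((n:ℝ)+1) ^ 2 := by
        gcongr
        exact pow_le_one₀ (abs_nonneg x) h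

lemma Li2_zero : Li2 0 = 0 := by
  unfold Li2
  simp

lemma Li2_one : Li2 1 = Real.pi ^ 2 / 6 := by
  have h := hasSum_zeta_two
  rw [← hasSum_nat_add_iff' 1] at h
  norm_num at h
  refine ((hasSum_Li2 (by norm_num)).unique ?_)
  convert h using 2 with n
  · rfl
  push_cast
  norm_num


lemma Li2_dup {x : ℝ} (h : |x| ≤ 1) :
    Li2 (x ^ 2) = 2 * Li2 x + 2 * Li2 (-x) := by
  have hx2 : |x ^ 2| ≤ 1 := by rw [abs_pow]; exact pow_le_one₀ (abs_nonneg x) h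
  have hadd := (hasSum_Li2 h).add (hasSum_Li2 (by rwa [abs_neg] : |(-x)| ≤ 1))
  set F : ℕ → ℝ := fun n => x ^ (n + 1) / ((n : ℝ) + 1) ^ 2 + (-x) ^ (n + 1) / ((n : ℝ) + 1) ^ 2
    with hF
  have hinj : Function.Injective (fun m : ℕ => 2 * m + 1) := fun a b hab => by dsimp at hab; omega
  have hzero : ∀ n ∉ Set.range (fun m : ℕ => 2 * m + 1), F n = 0 := by
    intro n hn
    have hodd : Even n := by
      rcases Nat.even_or_odd n with he | ho
      · exact he
      · obtain ⟨k, hk⟩ := ho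
        exact absurd ⟨k, by dsimp; omega⟩ hn
    have : (-x) ^ (n + 1) = -(x ^ (n + 1)) := by
      rw [Odd.neg_pow]
      exact hodd.add_one
    simp [hF, this, neg_div]
  have h2 : HasSum (F ∘ fun m : ℕ => 2 * m + 1) (Li2 x + Li2 (-x)) :=
    (Function.Injective.hasSum_iff hinj hzero).mpr hadd
  have h3 : (F ∘ fun m : ℕ => 2 * m + 1) =
      fun m : ℕ => (1 / 2) * ((x ^ 2) ^ (m + 1) / ((m : ℝ) + 1) ^ 2) := by
    funext m
    have hne : ((m : ℝ) + 1) ≠ 0 := by positivity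
    simp only [Function.comp, hF]
    have hc : ((2 * m + 1 : ℕ) : ℝ) + 1 = 2 * ((m : ℝ) + 1) := by push_cast; ring
    have hp : (-x) ^ (2 * m + 1 + 1) = x ^ (2 * m + 1 + 1) := by
      rw [Even.neg_pow]; exact ⟨m + 1, by ring⟩
    rw [hc, hp, ← pow_mul]
    have : 2 * m + 1 + 1 = 2 * (m + 1) := by ring
    rw [this, pow_mul]
    field_simp
    ring
  rw [h3] at h2
  have h4 := (hasSum_Li2 hx2).mul_left (1 / 2)
  have := h2.unique h4
  linarith


noncomputable def DLi2 (x : ℝ) : ℝ := if x = 0 then 1 else -Real.log (1 - x) / x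

lemma tsum_deriv_eq {x : ℝ} (h : |x| < 1) : ∑' n : ℕ, x ^ n / ((n : ℝ) + 1) = DLi2 x := by
  rcases eq_or_ne x 0 with rfl | hx
  · rw [tsum_eq_single 0 (by intro n hn; simp [zero_pow hn])]
    simp [DLi2]
  · have hs := (Real.hasSum_pow_div_log_of_abs_lt_one h).mul_left x⁻¹
    have he : (fun n : ℕ => x⁻¹ * (x ^ (n + 1) / ((n : ℝ) + 1))) =
        fun n : ℕ => x ^ n / ((n : ℝ) + 1) := by
      funext n
      have : ((n : ℝ) + 1) ≠ 0 := by positivity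
      rw [pow_succ]
      field_simp
    rw [he] at hs
    rw [hs.tsum_eq, DLi2, if_neg hx]
    field_simp

lemma hasDerivAt_Li2 {x : ℝ} (h : |x| < 1) : HasDerivAt Li2 (DLi2 x) x := by
  set r : ℝ := (1 + |x|) / 2 with hr
  have hr1 : r < 1 := by simp only [hr]; linarith
  have hxr : |x| < r := by simp only [hr]; linarith [abs_nonneg x]
  have hr0 : 0 ≤ r := by positivity
  have key : HasDerivAt (fun z : ℝ => ∑' n : ℕ, z ^ (n + 1) / ((n : ℝ) + 1) ^ 2)
      (∑' n : ℕ, x ^ n / ((n : ℝ) + 1)) x := by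
    apply hasDerivAt_tsum_of_isPreconnected (u := fun n : ℕ => r ^ n)
      (summable_geometric_of_lt_one hr0 hr1) Metric.isOpen_ball
      (convex_ball (0:ℝ) r).isPreconnected
      (y₀ := 0) (g' := fun n y => y ^ n / ((n : ℝ) + 1))
    · intro n y _
      have hne : ((n : ℝ) + 1) ≠ 0 := by positivity
      have := (hasDerivAt_pow (n + 1) y).div_const (((n : ℝ) + 1) ^ 2)
      refine this.congr_deriv ?_
      push_cast
      field_simp
    · intro n y hy
      rw [mem_ball_zero_iff, Real.norm_eq_abs] at hy
      rw [Real.norm_eq_abs, abs_div, abs_pow]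
      have h1 : |(n : ℝ) + 1| = (n : ℝ) + 1 := abs_of_nonneg (by positivity)
      calc |y| ^ n / |(n : ℝ) + 1| ≤ |y| ^ n := by
            rw [h1]
            have h2 : (0:ℝ) ≤ (n : ℝ) := Nat.cast_nonneg n
            exact div_le_self (pow_nonneg (abs_nonneg y) n) (by linarith)
        _ ≤ r ^ n := by gcongr
    · rw [mem_ball_zero_iff, norm_zero]
      linarith [abs_nonneg x]
    · apply Summable.congr (f := fun _ : ℕ => (0:ℝ)) summable_zero
      intro n
      simp [zero_pow (Nat.succ_ne_zero n)]
    · rwa [mem_ball_zero_iff, Real.norm_eq_abs]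
  rw [tsum_deriv_eq h] at key
  exact key

lemma continuousOn_Li2 : ContinuousOn Li2 (Set.Icc (-1 : ℝ) 1) := by
  have hcl : Continuous fun y : ℝ => min 1 (max (-1) y) :=
    continuous_const.min (continuous_const.max continuous_id)
  have hmem : ∀ y : ℝ, |min 1 (max (-1) y)| ≤ 1 := by
    intro y
    rw [abs_le]
    constructor
    · exact le_min (by norm_num) (le_max_left _ _)
    · exact min_le_left _ _
  have hc : Continuous fun y : ℝ => ∑' n : ℕ, (min 1 (max (-1) y)) ^ (n + 1) / ((n : ℝ) + 1) ^ 2 := by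
    apply continuous_tsum (u := fun n : ℕ => 1 / ((n : ℝ) + 1) ^ 2)
    · intro n
      exact (hcl.pow (n + 1)).div_const _
    · have := (summable_nat_add_iff (f := fun n : ℕ => 1 / (n : ℝ) ^ 2) 1).mpr
        (Real.summable_one_div_nat_pow.mpr one_lt_two)
      simpa using this
    · intro n y
      rw [Real.norm_eq_abs, abs_div, abs_pow, abs_of_nonneg (by positivity : (0:ℝ) ≤ ((n:ℝ)+1)^2)]
      gcongr
      exact pow_le_one₀ (abs_nonneg _) (hmem y)
  apply (hc.continuousOn (s := Set.Icc (-1:ℝ) 1)).congr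
  intro y hy
  obtain ⟨h1, h2⟩ := hy
  have : min 1 (max (-1) y) = y := by
    rw [max_eq_right h1, min_eq_right h2]
  simp only [Li2, this]


lemma landen {x : ℝ} (hx : x ∈ Set.Icc (0:ℝ) (1/2)) :
    Li2 x + Li2 (x / (x - 1)) + (Real.log (1 - x)) ^ 2 / 2 = 0 := by
  set F : ℝ → ℝ := fun y => Li2 y + Li2 (y / (y - 1)) + (Real.log (1 - y)) ^ 2 / 2 with hF
  have key : ∀ y ∈ Set.Icc (0:ℝ) (1/2), F y = F 0 := by
    apply constant_of_has_deriv_right_zero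
    · -- continuity
      have hmap1 : Set.MapsTo (fun y : ℝ => y) (Set.Icc (0:ℝ) (1/2)) (Set.Icc (-1:ℝ) 1) := by
        intro y hy
        obtain ⟨h1, h2⟩ := hy
        constructor <;> dsimp <;> linarith
      have hinner : ContinuousOn (fun y : ℝ => y / (y - 1)) (Set.Icc (0:ℝ) (1/2)) := by
        apply ContinuousOn.div continuousOn_id (continuousOn_id.sub continuousOn_const)
        intro y ⟨h1, h2⟩
        simp only [Pi.sub_apply, id]
        intro hc
        have : y = 1 := by linarith [sub_eq_zero.mp hc]
        linarith
      have hmap2 : Set.MapsTo (fun y : ℝ => y / (y - 1)) (Set.Icc (0:ℝ) (1/2))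
          (Set.Icc (-1:ℝ) 1) := by
        intro y ⟨h1, h2⟩
        have hylt : y - 1 < 0 := by linarith
        constructor
        · dsimp only
          rw [le_div_iff_of_neg hylt]
          linarith
        · dsimp only
          have := div_nonpos_of_nonneg_of_nonpos h1 hylt.le
          linarith
      apply ContinuousOn.add
      apply ContinuousOn.add
      · exact continuousOn_Li2.comp (continuousOn_id) hmap1
      · exact continuousOn_Li2.comp hinner hmap2
      · apply ContinuousOn.div_const
        apply ContinuousOn.pow
        apply ContinuousOn.log
        · exact continuousOn_const.sub continuousOn_id
        · intro y ⟨h1, h2⟩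
          intro hc
          have : y = 1 := by linarith [sub_eq_zero.mp hc]
          linarith
    · -- derivative zero on Ico
      intro y hy
      obtain ⟨h1, h2⟩ := hy
      have hy1 : |y| < 1 := by rw [abs_of_nonneg h1]; linarith
      have hyd : y - 1 < 0 := by linarith
      have hyd' : y - 1 ≠ 0 := ne_of_lt hyd
      have hq : y / (y - 1) ≤ 0 := div_nonpos_of_nonneg_of_nonpos h1 hyd.le
      have hqgt : -1 < y / (y - 1) := by
        rw [lt_div_iff_of_neg hyd]
        linarith
      have hq1 : |y / (y - 1)| < 1 := by
        rw [abs_of_nonpos hq]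
        linarith
      have hd1 : HasDerivAt Li2 (DLi2 y) y := hasDerivAt_Li2 hy1
      have hdin : HasDerivAt (fun z : ℝ => z / (z - 1)) (-1 / (y - 1) ^ 2) y := by
        have := (hasDerivAt_id y).div ((hasDerivAt_id y).sub_const 1) hyd'
        refine this.congr_deriv ?_
        simp only [id]
        field_simp
        ring
      have hd2 : HasDerivAt (fun z : ℝ => Li2 (z / (z - 1)))
          (DLi2 (y / (y - 1)) * (-1 / (y - 1) ^ 2)) y :=
        by exact (hasDerivAt_Li2 hq1).comp y hdin
      have h1y : (1:ℝ) - y ≠ 0 := ne_of_gt (by linarith)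
      have hlog : HasDerivAt (fun z : ℝ => Real.log (1 - z)) (-(1 - y)⁻¹) y := by
        have := (Real.hasDerivAt_log h1y).comp y
          ((hasDerivAt_const y (1:ℝ)).sub (hasDerivAt_id y))
        refine this.congr_deriv ?_
        ring
      have hd3 : HasDerivAt (fun z : ℝ => (Real.log (1 - z)) ^ 2 / 2)
          (Real.log (1 - y) * -(1 - y)⁻¹) y := by
        have := ((hlog.pow 2).div_const 2)
        refine this.congr_deriv ?_
        ring
      have total := (hd1.add hd2).add hd3
      have hzero : DLi2 y + DLi2 (y / (y - 1)) * (-1 / (y - 1) ^ 2)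
          + Real.log (1 - y) * -(1 - y)⁻¹ = 0 := by
        rcases eq_or_ne y 0 with rfl | hy0
        · simp [DLi2]
        · have hq0 : y / (y - 1) ≠ 0 := div_ne_zero hy0 hyd'
          rw [DLi2, if_neg hy0, DLi2, if_neg hq0]
          have harg : 1 - y / (y - 1) = -1 / (y - 1) := by field_simp; ring
          rw [harg]
          have hlogeq : Real.log (-1 / (y - 1)) = -Real.log (1 - y) := by
            rw [show (-1 : ℝ) / (y - 1) = (1 - y)⁻¹ by
              rw [inv_eq_one_div, div_eq_div_iff hyd' h1y]; ring, Real.log_inv]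
          rw [hlogeq]
          field_simp
          ring
      rw [hzero] at total
      exact total.hasDerivWithinAt
  have h0 : F 0 = 0 := by
    simp [hF, Li2_zero]
  have := key x hx
  rw [h0] at this
  simpa [hF] using this


theorem pi_sq_li2_combination :
    Real.pi ^ 2 = 36 * Li2 (1 / 2) - 36 * Li2 (1 / 4) - 12 * Li2 (1 / 8) + 6 * Li2 (1 / 64) := by
  have h2 := Li2_dup (x := 1) (by norm_num)
  rw [one_pow, Li2_one] at h2
  have h7 := Li2_dup (x := 1/2) (by rw [abs_of_nonneg] <;> norm_num)
  rw [show ((1:ℝ)/2)^2 = 1/4 by norm_num] at h7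
  have h8 := Li2_dup (x := 1/3) (by rw [abs_of_nonneg] <;> norm_num)
  rw [show ((1:ℝ)/3)^2 = 1/9 by norm_num] at h8
  have h9 := Li2_dup (x := 1/8) (by rw [abs_of_nonneg] <;> norm_num)
  rw [show ((1:ℝ)/8)^2 = 1/64 by norm_num] at h9
  have h3 := landen (x := 1/2) (by constructor <;> norm_num)
  rw [show ((1:ℝ)/2)/((1:ℝ)/2 - 1) = -1 by norm_num,
      show (1:ℝ) - 1/2 = 1/2 by norm_num,
      show Real.log (1/2) = -Real.log 2 by
        rw [show ((1:ℝ)/2) = 2⁻¹ by norm_num, Real.log_inv]] at h3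
  have h4 := landen (x := 1/3) (by constructor <;> norm_num)
  rw [show ((1:ℝ)/3)/((1:ℝ)/3 - 1) = -(1/2) by norm_num,
      show (1:ℝ) - 1/3 = 2/3 by norm_num,
      show Real.log (2/3) = Real.log 2 - Real.log 3 from
        Real.log_div (by norm_num) (by norm_num)] at h4
  have h5 := landen (x := 1/4) (by constructor <;> norm_num)
  rw [show ((1:ℝ)/4)/((1:ℝ)/4 - 1) = -(1/3) by norm_num,
      show (1:ℝ) - 1/4 = 3/4 by norm_num,
      show Real.log (3/4) = Real.log 3 - 2 * Real.log 2 by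
        rw [Real.log_div (by norm_num) (by norm_num),
          show (4:ℝ) = 2^2 by norm_num, Real.log_pow]
        push_cast; ring] at h5
  have h6 := landen (x := 1/9) (by constructor <;> norm_num)
  rw [show ((1:ℝ)/9)/((1:ℝ)/9 - 1) = -(1/8) by norm_num,
      show (1:ℝ) - 1/9 = 8/9 by norm_num,
      show Real.log (8/9) = 3 * Real.log 2 - 2 * Real.log 3 by
        rw [Real.log_div (by norm_num) (by norm_num),
          show (8:ℝ) = 2^3 by norm_num, show (9:ℝ) = 3^2 by norm_num,
          Real.log_pow, Real.log_pow]
        push_cast; ring] at h6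
  nlinarith [h2, h3, h4, h5, h6, h7, h8, h9, sq_nonneg (Real.log 2), sq_nonneg (Real.log 3)]
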